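/- (Instance of Proposition 5.1(i): a person-by-person optimal policy exists under control sharing but not for the static reduction.) Fix α ∈ (0,1) and β > 1 and assume E[ω₂²] < ∞. Then: (a) the control-sharing policy γ₁* ≡ 0, δ₂^{cs*}(y, u, s) = s + u is person-by-person optimal for (P^{CS}): J^{CS}(γ₁*, δ₂^{cs*}) = 0; for every measurable γ₁ : ℝ → ℝ the integrand of J^{CS}(γ₁, δ₂^{cs*}) equals (α + β)·γ₁(ω₁)² pointwise, hence is ≥ 0; and for every measurable β̂ : ℝ × ℝ × ℝ → ℝ the integrand of J^{CS}(γ₁*, β̂) equals (β − 1)·(β̂(ω₁, 0, ω₂) − ω₂)² pointwise, hence is ≥ 0. (b) In contrast, for every measurable δ₂ : ℝ × ℝ → ℝ with E[(δ₂(ω₁, ω₂) − ω₂)²] < ∞, one has J^S(t, δ₂) = (α − 1)·t² + 2t·E[δ₂(ω₁, ω₂) − ω₂] + (β − 1)·E[(δ₂(ω₁, ω₂) − ω₂)²] for every constant DM1 policy t ∈ ℝ, so the infimum over t ∈ ℝ of J^S(t, δ₂) is −∞; consequently no static policy with finite expected cost is person-by-person optimal for (P^S). -/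

import Mathlib

open MeasureTheory
open scoped ENNReal


lemma aux_quad (k A B M : ℝ) (hk : 0 < k) : ∃ t : ℝ, -k * t^2 + 2*t*A + B < M := by
  set r := Real.sqrt (max 0 ((B - M)/k)) + 1 with hr
  have hs : Real.sqrt (max 0 ((B - M)/k)) ^ 2 = max 0 ((B - M)/k) :=
    Real.sq_sqrt (le_max_left _ _)
  have hsn : 0 ≤ Real.sqrt (max 0 ((B - M)/k)) := Real.sqrt_nonneg _
  have hr2 : (B - M)/k < r^2 := by
    have h1 : (B - M)/k ≤ max 0 ((B - M)/k) := le_max_right _ _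
    nlinarith
  have hkey : -k * r^2 + B < M := by
    have := (div_lt_iff₀ hk).mp hr2
    nlinarith
  have hrn : 0 ≤ r := by positivity
  rcases le_total A 0 with h | h
  · exact ⟨r, by nlinarith⟩
  · exact ⟨-r, by nlinarith⟩

lemma aux_bound (β g e : ℝ) (hβ : 0 < β - 1) :
    e^2 ≤ (2/(β-1)) * (2*g*e + (β-1)*e^2) + (4/(β-1)^2) * g^2 := by
  rw [← sub_nonneg]
  have h : (2/(β-1)) * (2*g*e + (β-1)*e^2) + (4/(β-1)^2) * g^2 - e^2
      = ((β-1)*e + 2*g)^2 / (β-1)^2 := by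
    field_simp; ring
  rw [h]; positivity

lemma aux_alg2 (α β g w n : ℝ) (hβ : 0 < β - 1) :
    α*g^2 + β*(w + (-g/(β-1) + Real.sqrt (max ((1/(β-1)+1-α)*g^2 - n) 0 / (β-1))) - w)^2
      - (g - (w + (-g/(β-1) + Real.sqrt (max ((1/(β-1)+1-α)*g^2 - n) 0/(β-1)))) + w)^2
    = -(min ((1/(β-1)+1-α)*g^2) n) := by
  set c₁ := 1/(β-1)+1-α with hc₁
  set m := max (c₁*g^2 - n) 0 with hm
  have hmn : 0 ≤ m := le_max_right _ _
  have hs : Real.sqrt (m/(β-1)) ^ 2 = m/(β-1) := Real.sq_sqrt (by positivity)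
  have hmin : min (c₁*g^2) n = c₁*g^2 - m := by
    rcases le_total (c₁*g^2) n with h | h
    · rw [min_eq_left h, hm, max_eq_right (by linarith)]; ring
    · rw [min_eq_right h, hm, max_eq_left (by linarith)]; ring
  set s := Real.sqrt (m/(β-1)) with hsdef
  rw [hmin]
  have hβne : β - 1 ≠ 0 := ne_of_gt hβ
  have hs' : s^2 * (β-1) = m := by rw [hs]; field_simp
  rw [hc₁, ← hs']
  field_simp
  ring

/-- **Instance of Proposition 5.1(i): a person-by-person optimal policy exists under
control sharing but not for the static reduction.** For the cost
`c (ω₂, u¹, u²) = α (u¹)² + β (u² − ω₂)² − (u¹ − u² + ω₂)²` with `α ∈ (0,1)`, `β > 1`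
and `E[ω₂²] < ∞`: (a) the control-sharing policy `γ₁* ≡ 0`,
`δ₂^{cs*} (y, u, s) = s + u` is person-by-person optimal for `(P^{CS})`; (b) for every
measurable `δ₂` with `E[(δ₂(ω₁,ω₂) − ω₂)²] < ∞` the static cost of constant DM1 policies
is `(α−1) t² + 2t E[δ₂ − ω₂] + (β−1) E[(δ₂ − ω₂)²]`, whose infimum over `t` is `−∞`;
consequently no static policy with finite expected cost is person-by-person optimal for
`(P^S)`. -/
theorem prop51_instance_control_sharing_vs_static
    {Ω : Type*} [MeasurableSpace Ω] (P : Measure Ω) [IsProbabilityMeasure P]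
    (ω₁ ω₂ : Ω → ℝ) (hω₁ : Measurable ω₁) (hω₂ : Measurable ω₂)
    (hω₂sq : Integrable (fun ω => (ω₂ ω) ^ 2) P)
    (α β : ℝ) (hα : α ∈ Set.Ioo (0 : ℝ) 1) (hβ : 1 < β)
    (c : ℝ → ℝ → ℝ → ℝ)
    (hc : ∀ w u₁ u₂, c w u₁ u₂
      = α * u₁ ^ 2 + β * (u₂ - w) ^ 2 - (u₁ - u₂ + w) ^ 2)
    (JCS : (ℝ → ℝ) → (ℝ × ℝ × ℝ → ℝ) → ℝ≥0∞)
    (hJCS : ∀ γ₁ δ₂cs, JCS γ₁ δ₂cs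
      = ∫⁻ ω, ENNReal.ofReal
          (c (ω₂ ω) (γ₁ (ω₁ ω)) (δ₂cs (ω₁ ω, γ₁ (ω₁ ω), ω₂ ω))) ∂P)
    (JS : (ℝ → ℝ) → (ℝ × ℝ → ℝ) → ℝ)
    (hJS : ∀ γ₁ δ₂, JS γ₁ δ₂
      = ∫ ω, c (ω₂ ω) (γ₁ (ω₁ ω)) (δ₂ (ω₁ ω, ω₂ ω)) ∂P) :
    -- (a): person-by-person optimality of (0, (y,u,s) ↦ s + u) for (P^{CS})
    (JCS (fun _ => 0) (fun q => q.2.2 + q.2.1) = 0)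
    ∧ (∀ γ₁ : ℝ → ℝ, Measurable γ₁ →
        (∀ ω, c (ω₂ ω) (γ₁ (ω₁ ω)) (ω₂ ω + γ₁ (ω₁ ω))
          = (α + β) * (γ₁ (ω₁ ω)) ^ 2)
        ∧ JCS (fun _ => 0) (fun q => q.2.2 + q.2.1)
            ≤ JCS γ₁ (fun q => q.2.2 + q.2.1))
    ∧ (∀ βhat : ℝ × ℝ × ℝ → ℝ, Measurable βhat →
        (∀ ω, c (ω₂ ω) 0 (βhat (ω₁ ω, 0, ω₂ ω))
          = (β - 1) * (βhat (ω₁ ω, 0, ω₂ ω) - ω₂ ω) ^ 2)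
        ∧ JCS (fun _ => 0) (fun q => q.2.2 + q.2.1) ≤ JCS (fun _ => 0) βhat)
    -- (b): for the static reduction the DM1 infimum is −∞
    ∧ (∀ δ₂ : ℝ × ℝ → ℝ, Measurable δ₂ →
        Integrable (fun ω => (δ₂ (ω₁ ω, ω₂ ω) - ω₂ ω) ^ 2) P →
        (∀ t : ℝ, JS (fun _ => t) δ₂
          = (α - 1) * t ^ 2
            + 2 * t * (∫ ω, (δ₂ (ω₁ ω, ω₂ ω) - ω₂ ω) ∂P)
            + (β - 1) * (∫ ω, (δ₂ (ω₁ ω, ω₂ ω) - ω₂ ω) ^ 2 ∂P))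
        ∧ (∀ M : ℝ, ∃ t : ℝ, JS (fun _ => t) δ₂ < M))
    -- no static policy with finite expected cost is person-by-person optimal for (P^S)
    ∧ (∀ (γ₁ : ℝ → ℝ) (δ₂ : ℝ × ℝ → ℝ), Measurable γ₁ → Measurable δ₂ →
        Integrable (fun ω => c (ω₂ ω) (γ₁ (ω₁ ω)) (δ₂ (ω₁ ω, ω₂ ω))) P →
        ¬ ((∀ γ₁' : ℝ → ℝ, Measurable γ₁' → JS γ₁ δ₂ ≤ JS γ₁' δ₂)
            ∧ (∀ δ₂' : ℝ × ℝ → ℝ, Measurable δ₂' → JS γ₁ δ₂ ≤ JS γ₁ δ₂'))) := by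
  obtain ⟨hα0, hα1⟩ := hα
  have hβ0 : (0:ℝ) < β - 1 := by linarith
  -- part 1
  have h1 : JCS (fun _ => 0) (fun q => q.2.2 + q.2.1) = 0 := by
    rw [hJCS]
    have hz : ∀ ω : Ω, ENNReal.ofReal
        (c (ω₂ ω) ((fun _ : ℝ => (0:ℝ)) (ω₁ ω))
          ((fun q : ℝ × ℝ × ℝ => q.2.2 + q.2.1) (ω₁ ω, (fun _ : ℝ => (0:ℝ)) (ω₁ ω), ω₂ ω))) = 0 := by
      intro ω
      have hz0 : c (ω₂ ω) 0 (ω₂ ω) = 0 := by rw [hc]; ring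
      simp [hz0]
    simp only [hz, lintegral_zero]
  -- key lemma for part (b)
  have key : ∀ δ₂ : ℝ × ℝ → ℝ, Measurable δ₂ →
      Integrable (fun ω => (δ₂ (ω₁ ω, ω₂ ω) - ω₂ ω) ^ 2) P →
      (∀ t : ℝ, JS (fun _ => t) δ₂
        = (α - 1) * t ^ 2
          + 2 * t * (∫ ω, (δ₂ (ω₁ ω, ω₂ ω) - ω₂ ω) ∂P)
          + (β - 1) * (∫ ω, (δ₂ (ω₁ ω, ω₂ ω) - ω₂ ω) ^ 2 ∂P))
      ∧ (∀ M : ℝ, ∃ t : ℝ, JS (fun _ => t) δ₂ < M) := by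
    intro δ₂ hδ hInt2
    have hem : Measurable (fun ω => δ₂ (ω₁ ω, ω₂ ω) - ω₂ ω) :=
      (hδ.comp (hω₁.prodMk hω₂)).sub hω₂
    have hE1 : Integrable (fun ω => δ₂ (ω₁ ω, ω₂ ω) - ω₂ ω) P := by
      refine (hInt2.add (integrable_const 1)).mono' hem.aestronglyMeasurable
        (Filter.Eventually.of_forall fun ω => ?_)
      simp only [Pi.add_apply]
      rw [Real.norm_eq_abs]
      nlinarith [sq_nonneg (|δ₂ (ω₁ ω, ω₂ ω) - ω₂ ω| - 1),
        sq_abs (δ₂ (ω₁ ω, ω₂ ω) - ω₂ ω), abs_nonneg (δ₂ (ω₁ ω, ω₂ ω) - ω₂ ω)]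
    have hform : ∀ t : ℝ, JS (fun _ => t) δ₂
        = (α - 1) * t ^ 2 + 2 * t * (∫ ω, (δ₂ (ω₁ ω, ω₂ ω) - ω₂ ω) ∂P)
          + (β - 1) * (∫ ω, (δ₂ (ω₁ ω, ω₂ ω) - ω₂ ω) ^ 2 ∂P) := by
      intro t
      rw [hJS]
      have hfe : (fun ω => c (ω₂ ω) ((fun _ : ℝ => t) (ω₁ ω)) (δ₂ (ω₁ ω, ω₂ ω)))
          = fun ω => (α - 1) * t ^ 2 + (2 * t * (δ₂ (ω₁ ω, ω₂ ω) - ω₂ ω)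
              + (β - 1) * (δ₂ (ω₁ ω, ω₂ ω) - ω₂ ω) ^ 2) := by
        funext ω; rw [hc]; ring
      have I2 : Integrable (fun ω => 2 * t * (δ₂ (ω₁ ω, ω₂ ω) - ω₂ ω)
          + (β - 1) * (δ₂ (ω₁ ω, ω₂ ω) - ω₂ ω) ^ 2) P :=
        (hE1.const_mul _).add (hInt2.const_mul _)
      have hM1 : ∫ a, 2 * t * (δ₂ (ω₁ a, ω₂ a) - ω₂ a) ∂P
          = 2 * t * ∫ ω, (δ₂ (ω₁ ω, ω₂ ω) - ω₂ ω) ∂P := integral_const_mul _ _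
      have hM2 : ∫ a, (β - 1) * (δ₂ (ω₁ a, ω₂ a) - ω₂ a) ^ 2 ∂P
          = (β - 1) * ∫ ω, (δ₂ (ω₁ ω, ω₂ ω) - ω₂ ω) ^ 2 ∂P := integral_const_mul _ _
      rw [hfe, integral_add (integrable_const _) I2,
        integral_add (hE1.const_mul (2 * t)) (hInt2.const_mul (β - 1)),
        hM1, hM2, integral_const]
      simp [measure_univ]
      ring
    refine ⟨hform, fun M => ?_⟩
    obtain ⟨t, ht⟩ := aux_quad (1 - α) (∫ ω, (δ₂ (ω₁ ω, ω₂ ω) - ω₂ ω) ∂P)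
      ((β - 1) * (∫ ω, (δ₂ (ω₁ ω, ω₂ ω) - ω₂ ω) ^ 2 ∂P)) M (by linarith)
    exact ⟨t, by rw [hform t]; nlinarith⟩
  refine ⟨h1, ?_, ?_, key, ?_⟩
  · intro γ₁ _
    exact ⟨fun ω => by rw [hc]; ring, by rw [h1]; exact zero_le⟩
  · intro βhat _
    exact ⟨fun ω => by rw [hc]; ring, by rw [h1]; exact zero_le⟩
  · intro γ₁ δ₂ hγ₁ hδ hcint
    rintro ⟨hp1, hp2⟩
    by_cases hInt2 : Integrable (fun ω => (δ₂ (ω₁ ω, ω₂ ω) - ω₂ ω) ^ 2) P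
    · obtain ⟨_, hunb⟩ := key δ₂ hδ hInt2
      obtain ⟨t, ht⟩ := hunb (JS γ₁ δ₂)
      exact absurd (hp1 (fun _ => t) measurable_const) (not_le.2 ht)
    · -- g² is not integrable
      have hgm : Measurable (fun ω => γ₁ (ω₁ ω)) := hγ₁.comp hω₁
      have hg2 : ¬ Integrable (fun ω => (γ₁ (ω₁ ω)) ^ 2) P := by
        intro hgi
        apply hInt2
        have hem : Measurable (fun ω => δ₂ (ω₁ ω, ω₂ ω) - ω₂ ω) :=
          (hδ.comp (hω₁.prodMk hω₂)).sub hω₂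
        have hh : Integrable (fun ω =>
            c (ω₂ ω) (γ₁ (ω₁ ω)) (δ₂ (ω₁ ω, ω₂ ω)) - (α - 1) * (γ₁ (ω₁ ω)) ^ 2) P :=
          hcint.sub (hgi.const_mul _)
        refine ((hh.const_mul (2/(β-1))).add (hgi.const_mul (4/(β-1)^2))).mono'
          (hem.pow_const 2).aestronglyMeasurable (Filter.Eventually.of_forall fun ω => ?_)
        simp only [Pi.add_apply]
        rw [Real.norm_eq_abs, abs_of_nonneg (sq_nonneg _)]
        have hcc : c (ω₂ ω) (γ₁ (ω₁ ω)) (δ₂ (ω₁ ω, ω₂ ω)) - (α - 1) * (γ₁ (ω₁ ω)) ^ 2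
            = 2 * (γ₁ (ω₁ ω)) * (δ₂ (ω₁ ω, ω₂ ω) - ω₂ ω)
              + (β - 1) * (δ₂ (ω₁ ω, ω₂ ω) - ω₂ ω) ^ 2 := by
          rw [hc]; ring
        rw [hcc]
        exact aux_bound β (γ₁ (ω₁ ω)) (δ₂ (ω₁ ω, ω₂ ω) - ω₂ ω) hβ0
      -- DM2 deviations and monotone convergence
      set c₁ : ℝ := 1/(β-1) + 1 - α with hc₁
      have hc₁0 : 0 < c₁ := by
        have h01 : (0:ℝ) < 1/(β-1) := by positivity
        rw [hc₁]; linarith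
      set v : ℕ → ℝ → ℝ := fun n y =>
        -(γ₁ y)/(β-1) + Real.sqrt (max (c₁ * (γ₁ y)^2 - n) 0 / (β-1)) with hv
      have hvm : ∀ n, Measurable (v n) := by
        intro n
        apply Measurable.add
        · exact (hγ₁.neg).div_const _
        · exact Real.continuous_sqrt.measurable.comp
            (((((hγ₁.pow_const 2).const_mul c₁).sub measurable_const).max
              measurable_const).div_const _)
      set δ' : ℕ → ℝ × ℝ → ℝ := fun n p => p.2 + v n p.1 with hδ'
      have hδ'm : ∀ n, Measurable (δ' n) := fun n =>
        measurable_snd.add ((hvm n).comp measurable_fst)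
      set F : ℕ → Ω → ℝ := fun n ω => min (c₁ * (γ₁ (ω₁ ω))^2) n with hF
      have hFm : ∀ n, Measurable (F n) := fun n =>
        ((hgm.pow_const 2).const_mul c₁).min measurable_const
      have hF0 : ∀ n ω, 0 ≤ F n ω := fun n ω =>
        le_min (by positivity) (Nat.cast_nonneg n)
      have hFint : ∀ n, Integrable (F n) P := fun n =>
        (integrable_const (n : ℝ)).mono' (hFm n).aestronglyMeasurable
          (Filter.Eventually.of_forall fun ω => by
            rw [Real.norm_eq_abs, abs_of_nonneg (hF0 n ω)]; exact min_le_right _ _)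
      have hpoint : ∀ (n : ℕ) ω, c (ω₂ ω) (γ₁ (ω₁ ω)) (δ' n (ω₁ ω, ω₂ ω)) = -(F n ω) := by
        intro n ω
        have h2 := aux_alg2 α β (γ₁ (ω₁ ω)) (ω₂ ω) (n : ℝ) hβ0
        rw [← hc₁] at h2
        simp only [hδ', hv, hF]
        rw [hc]
        exact h2
      have hJSn : ∀ n : ℕ, JS γ₁ (δ' n) = - ∫ ω, F n ω ∂P := by
        intro n
        rw [hJS]
        simp only [hpoint]
        rw [integral_neg]
      have hle : ∀ n : ℕ, ∫ ω, F n ω ∂P ≤ -(JS γ₁ δ₂) := by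
        intro n
        have h3 := hp2 (δ' n) (hδ'm n)
        rw [hJSn n] at h3
        linarith
      have hmct : ∫⁻ ω, ENNReal.ofReal (c₁ * (γ₁ (ω₁ ω))^2) ∂P
          ≤ ENNReal.ofReal (-(JS γ₁ δ₂)) := by
        have hsup : ∀ ω, ENNReal.ofReal (c₁ * (γ₁ (ω₁ ω))^2)
            = ⨆ n : ℕ, ENNReal.ofReal (F n ω) := by
          intro ω
          apply le_antisymm
          · have hA : c₁ * (γ₁ (ω₁ ω))^2 ≤ (⌈c₁ * (γ₁ (ω₁ ω))^2⌉₊ : ℝ) := Nat.le_ceil _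
            have hEq : F ⌈c₁ * (γ₁ (ω₁ ω))^2⌉₊ ω = c₁ * (γ₁ (ω₁ ω))^2 := by
              rw [hF]; exact min_eq_left hA
            calc ENNReal.ofReal (c₁ * (γ₁ (ω₁ ω))^2)
                = ENNReal.ofReal (F ⌈c₁ * (γ₁ (ω₁ ω))^2⌉₊ ω) := by rw [hEq]
              _ ≤ ⨆ n : ℕ, ENNReal.ofReal (F n ω) :=
                  le_iSup (fun n => ENNReal.ofReal (F n ω)) _
          · exact iSup_le fun n => ENNReal.ofReal_le_ofReal (min_le_left _ _)
        calc ∫⁻ ω, ENNReal.ofReal (c₁ * (γ₁ (ω₁ ω))^2) ∂P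
            = ∫⁻ ω, ⨆ n : ℕ, ENNReal.ofReal (F n ω) ∂P := lintegral_congr hsup
          _ = ⨆ n : ℕ, ∫⁻ ω, ENNReal.ofReal (F n ω) ∂P :=
              lintegral_iSup (fun n => (hFm n).ennreal_ofReal)
                (fun i j hij ω => ENNReal.ofReal_le_ofReal
                  (min_le_min le_rfl (Nat.cast_le.2 hij)))
          _ ≤ ENNReal.ofReal (-(JS γ₁ δ₂)) := iSup_le fun n => by
              rw [← ofReal_integral_eq_lintegral_ofReal (hFint n)
                (Filter.Eventually.of_forall (hF0 n))]
              exact ENNReal.ofReal_le_ofReal (hle n)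
      have hint : Integrable (fun ω => c₁ * (γ₁ (ω₁ ω))^2) P := by
        refine ⟨((hgm.pow_const 2).const_mul c₁).aestronglyMeasurable, ?_⟩
        rw [hasFiniteIntegral_iff_ofReal (Filter.Eventually.of_forall fun ω => by positivity)]
        exact lt_of_le_of_lt hmct ENNReal.ofReal_lt_top
      apply hg2
      have h4 := hint.const_mul (c₁⁻¹)
      simpa [← mul_assoc, inv_mul_cancel₀ (ne_of_gt hc₁0)] using h4
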